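/- Let H be a finite simple graph, and let c_3 = C_3(H)/|E(H)| and c_4 = C_4(H)/|E(H)| where C_k(H) denotes the number of closed walks of length k in H that trace a simple k-cycle. Then c_3·(c_3/2 − 1) ≤ c_4. -/

import Mathlib

open Finset

/-- The number of closed `k`-walks in `G` that trace a simple `k`-cycle: injective maps
`c : Fin k → V` such that consecutive vertices (cyclically) are adjacent. -/
def simpleCycleCount {V : Type*} [Fintype V] [DecidableEq V] (G : SimpleGraph V)
    [DecidableRel G.Adj] (k : ℕ) [NeZero k] : ℕ :=
  (Finset.univ.filter (fun c : Fin k → V =>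
    Function.Injective c ∧ ∀ j : Fin k, G.Adj (c j) (c (j + 1)))).card

section Aux

variable {V : Type*} [Fintype V] [DecidableEq V] (H : SimpleGraph V) [DecidableRel H.Adj]

private def eS : Finset (V × V) := Finset.univ.filter fun (x, y) => H.Adj x y

private def nbr (p : V × V) : Finset V :=
  Finset.univ.filter fun x => H.Adj p.1 x ∧ H.Adj p.2 x

private lemma eS_card : (eS H).card = 2 * H.edgeFinset.card := by
  rw [SimpleGraph.two_mul_card_edgeFinset]; rfl

private lemma mem_eS {p : V × V} : p ∈ eS H ↔ H.Adj p.1 p.2 := by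
  obtain ⟨a, b⟩ := p
  simp [eS]

private lemma mem_nbr {p : V × V} {x : V} : x ∈ nbr H p ↔ H.Adj p.1 x ∧ H.Adj p.2 x := by
  simp [nbr]

private lemma count3_eq : simpleCycleCount H 3 = ∑ p ∈ eS H, (nbr H p).card := by
  rw [← Finset.card_sigma]
  unfold simpleCycleCount
  apply Finset.card_bij (fun c _ => ⟨(c 1, c 2), c 0⟩)
  · rintro c hc
    rw [Finset.mem_filter] at hc
    obtain ⟨-, -, hadj⟩ := hc
    have h0 := hadj 0
    have h1 := hadj 1
    have h2 := hadj 2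
    norm_num at h0 h1 h2
    rw [Finset.mem_sigma, mem_eS, mem_nbr]
    exact ⟨h1, h0.symm, h2⟩
  · rintro c hc d hd h
    rw [Sigma.ext_iff] at h
    simp only [Prod.mk.injEq, heq_eq_eq] at h
    funext j
    fin_cases j
    · exact h.2
    · exact h.1.1
    · exact h.1.2
  · rintro ⟨⟨a, b⟩, x⟩ hq
    rw [Finset.mem_sigma, mem_eS, mem_nbr] at hq
    obtain ⟨hab, hax, hbx⟩ := hq
    refine ⟨![x, a, b], ?_, ?_⟩
    · rw [Finset.mem_filter]
      refine ⟨Finset.mem_univ _, ?_, ?_⟩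
      · intro i j hij
        fin_cases i <;> fin_cases j <;>
          simp_all [hax.ne', hbx.ne', hax.ne, hbx.ne, hab.ne, hab.ne'] <;>
          first
            | rfl
            | exact absurd hij hax.ne'
            | exact absurd hij hbx.ne'
            | exact absurd hij.symm hax.ne'
            | exact absurd hij.symm hbx.ne'
            | exact absurd hij hab.ne
            | exact absurd hij.symm hab.ne
      · intro j
        fin_cases j <;> norm_num
        · exact hax.symm
        · exact hab
        · exact hbx
    · norm_num; rfl

private lemma count4_ge :
    ((eS H).sigma fun p => ((nbr H p) ×ˢ (nbr H p)).filter fun q => q.1 ≠ q.2).card ≤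
      simpleCycleCount H 4 := by
  unfold simpleCycleCount
  apply Finset.card_le_card_of_injOn (fun q => ![q.2.1, q.1.1, q.2.2, q.1.2])
  · rintro ⟨⟨a, b⟩, x, y⟩ hq
    rw [Finset.mem_coe, Finset.mem_sigma, mem_eS] at hq
    obtain ⟨hab, hq2⟩ := hq
    rw [Finset.mem_filter, Finset.mem_product, mem_nbr, mem_nbr] at hq2
    obtain ⟨⟨⟨hax, hbx⟩, hay, hby⟩, hxy⟩ := hq2
    rw [Finset.mem_coe, Finset.mem_filter]
    refine ⟨Finset.mem_univ _, ?_, ?_⟩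
    · intro i j hij
      fin_cases i <;> fin_cases j <;>
        simp only [Matrix.cons_val_zero, Matrix.cons_val_one, Matrix.head_cons,
          Matrix.cons_val_two, Matrix.tail_cons, Matrix.cons_val_three] at hij ⊢ <;>
        first
          | rfl
          | exact absurd hij hax.ne'
          | exact absurd hij.symm hax.ne'
          | exact absurd hij hbx.ne'
          | exact absurd hij.symm hbx.ne'
          | exact absurd hij hay.ne'
          | exact absurd hij.symm hay.ne'
          | exact absurd hij hby.ne'
          | exact absurd hij.symm hby.ne'
          | exact absurd hij hab.ne
          | exact absurd hij.symm hab.ne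
          | exact absurd hij hxy
          | exact absurd hij.symm hxy
    · intro j
      fin_cases j <;> norm_num
      · exact hax.symm
      · exact hay
      · exact hby.symm
      · exact hbx
  · rintro ⟨⟨a, b⟩, x, y⟩ - ⟨⟨a', b'⟩, x', y'⟩ - h
    have h0 := congrFun h 0
    have h1 := congrFun h 1
    have h2 := congrFun h 2
    have h3 := congrFun h 3
    simp only [Matrix.cons_val_zero, Matrix.cons_val_one, Matrix.head_cons,
      Matrix.cons_val_two, Matrix.tail_cons, Matrix.cons_val_three] at h0 h1 h2 h3
    rw [Sigma.ext_iff]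
    simp only [Prod.mk.injEq, heq_eq_eq]
    exact ⟨⟨h1, h3⟩, h0, h2⟩

private lemma sum_sq_le :
    ∑ p ∈ eS H, (nbr H p).card ^ 2 ≤ simpleCycleCount H 4 + simpleCycleCount H 3 := by
  have hsplit : ∀ p ∈ eS H, (nbr H p).card ^ 2 =
      (((nbr H p) ×ˢ (nbr H p)).filter fun q => q.1 ≠ q.2).card + (nbr H p).card := by
    intro p _
    have h1 : (((nbr H p) ×ˢ (nbr H p)).filter fun q => q.1 = q.2).card = (nbr H p).card := by
      apply Finset.card_bij (fun q _ => q.1)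
      · rintro ⟨x, y⟩ hq
        rw [Finset.mem_filter, Finset.mem_product] at hq
        exact hq.1.1
      · rintro ⟨x, y⟩ hx ⟨x', y'⟩ hy h
        rw [Finset.mem_filter] at hx hy
        have hx2 : x = y := hx.2
        have hy2 : x' = y' := hy.2
        simp only at h
        simp [Prod.ext_iff, h, ← hx2, ← hy2]
      · intro x hx
        exact ⟨(x, x), by rw [Finset.mem_filter, Finset.mem_product]; exact ⟨⟨hx, hx⟩, rfl⟩, rfl⟩
    have h2 := Finset.card_filter_add_card_filter_not
      (s := (nbr H p) ×ˢ (nbr H p)) (p := fun q => q.1 = q.2)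
    rw [Finset.card_product] at h2
    simp only [ne_eq]
    rw [sq]
    omega
  rw [Finset.sum_congr rfl hsplit, Finset.sum_add_distrib, ← Finset.card_sigma, ← count3_eq]
  exact Nat.add_le_add_right (count4_ge H) _

end Aux

/-- For a finite simple graph `H` with `c₃ = C₃(H)/|E(H)|` and
`c₄ = C₄(H)/|E(H)|`, where `C_k` counts closed `k`-walks tracing simple `k`-cycles,
we have `c₃ (c₃/2 − 1) ≤ c₄`. -/
theorem triangle_fourcycle_ratio_ineq {V : Type*} [Fintype V] [DecidableEq V]
    (H : SimpleGraph V) [DecidableRel H.Adj]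
    (c3 c4 : ℝ)
    (hc3 : c3 = (simpleCycleCount H 3 : ℝ) / (H.edgeFinset.card : ℝ))
    (hc4 : c4 = (simpleCycleCount H 4 : ℝ) / (H.edgeFinset.card : ℝ)) :
    c3 * (c3 / 2 - 1) ≤ c4 := by
  set m : ℕ := H.edgeFinset.card with hm
  rcases Nat.eq_zero_or_pos m with h0 | hpos
  · rw [h0] at hc3 hc4
    simp at hc3 hc4
    rw [hc3, hc4]
    norm_num
  -- the key inequality over ℝ
  have key : (simpleCycleCount H 3 : ℝ) ^ 2 ≤
      2 * m * ((simpleCycleCount H 4 : ℝ) + (simpleCycleCount H 3 : ℝ)) := by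
    have cauchy := sq_sum_le_card_mul_sum_sq (s := eS H)
      (f := fun p => ((nbr H p).card : ℝ))
    have h3 : (simpleCycleCount H 3 : ℝ) = ∑ p ∈ eS H, ((nbr H p).card : ℝ) := by
      rw [count3_eq H]; push_cast; ring
    have h4 : ∑ p ∈ eS H, ((nbr H p).card : ℝ) ^ 2 ≤
        (simpleCycleCount H 4 : ℝ) + (simpleCycleCount H 3 : ℝ) := by
      have := sum_sq_le H
      calc ∑ p ∈ eS H, ((nbr H p).card : ℝ) ^ 2
          = ((∑ p ∈ eS H, (nbr H p).card ^ 2 : ℕ) : ℝ) := by push_cast; ring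
        _ ≤ _ := by exact_mod_cast this
    have hcard : ((eS H).card : ℝ) = 2 * m := by
      rw [eS_card H, hm]; push_cast; ring
    calc (simpleCycleCount H 3 : ℝ) ^ 2
        = (∑ p ∈ eS H, ((nbr H p).card : ℝ)) ^ 2 := by rw [h3]
      _ ≤ (eS H).card * ∑ p ∈ eS H, ((nbr H p).card : ℝ) ^ 2 := cauchy
      _ ≤ 2 * m * ((simpleCycleCount H 4 : ℝ) + (simpleCycleCount H 3 : ℝ)) := by
          rw [hcard]
          have : (0 : ℝ) ≤ 2 * m := by positivity
          exact mul_le_mul_of_nonneg_left h4 this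
  have hmpos : (0 : ℝ) < m := by exact_mod_cast hpos
  rw [hc3, hc4]
  set T3 := (simpleCycleCount H 3 : ℝ)
  set T4 := (simpleCycleCount H 4 : ℝ)
  have expand : T3 / ↑m * (T3 / ↑m / 2 - 1) = (T3 ^ 2 / 2 - T3 * m) / m ^ 2 := by
    field_simp
  rw [expand]
  rw [div_le_div_iff₀ (by positivity) hmpos]
  nlinarith [hmpos, key, mul_le_mul_of_nonneg_left key hmpos.le]
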